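/- arXiv:2507.19868 — 3 statements merged into one kernel-verified Lean document; each statement's English description precedes it below -/
import Mathlib

section
/- Let n ≥ 3 and let w_{ij} > 0 for all 1 ≤ i ≠ j ≤ n. Let V be the (2n−1)×(2n−1) matrix with V_{ii} = (n−1)^{-1} Σ_{j≠i} w_{ij} for i ∈ {1,…,n}; V_{n+j,n+j} = (n−1)^{-1} Σ_{i≠j} w_{ij} for j ∈ {1,…,n−1}; V_{i,n+j} = V_{n+j,i} = (n−1)^{-1} w_{ij} for i ∈ {1,…,n}, j ∈ {1,…,n−1} with i ≠ j; and all other entries 0. Then V is symmetric positive definite; in particular V is invertible. -/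
open Matrix

private lemma sum_ite_of_erase {α : Type*} [Fintype α] [DecidableEq α] (i : α) (f : α → ℝ) :
    ∑ j ∈ Finset.univ.erase i, f j = ∑ j, if j = i then 0 else f j := by
  rw [← Finset.filter_ne', Finset.sum_filter]
  exact Finset.sum_congr rfl fun j _ => by by_cases h : j = i <;> simp [h]

private lemma sum_fin_pred {n : ℕ} (g : Fin n → ℝ)
    (hg : ∀ j : Fin n, ¬ (j : ℕ) < n - 1 → g j = 0) :
    ∑ j : Fin n, g j = ∑ j : Fin (n - 1), g (Fin.castLE (Nat.sub_le n 1) j) := by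
  classical
  have h1 := Finset.sum_map Finset.univ
    ⟨Fin.castLE (Nat.sub_le n 1), Fin.castLE_injective _⟩ g
  simp only [Function.Embedding.coeFn_mk] at h1
  rw [← h1]
  symm
  apply Finset.sum_subset (Finset.subset_univ _)
  intro j _ hj
  apply hg
  intro hlt
  exact hj (Finset.mem_map.mpr ⟨⟨(j : ℕ), hlt⟩, Finset.mem_univ _, Fin.ext rfl⟩)

private def Bx (n : ℕ) (x : Fin n ⊕ Fin (n - 1) → ℝ) (j : Fin n) : ℝ :=
  if h : (j : ℕ) < n - 1 then x (Sum.inr ⟨(j : ℕ), h⟩) else 0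

private lemma Bx_castLE (n : ℕ) (x : Fin n ⊕ Fin (n - 1) → ℝ) (j : Fin (n - 1)) :
    Bx n x (Fin.castLE (Nat.sub_le n 1) j) = x (Sum.inr j) := by
  have h : ((Fin.castLE (Nat.sub_le n 1) j : Fin n) : ℕ) < n - 1 := j.isLt
  rw [Bx, dif_pos h]
  rfl

private lemma Bx_zero (n : ℕ) (x : Fin n ⊕ Fin (n - 1) → ℝ) (j : Fin n)
    (h : ¬ (j : ℕ) < n - 1) : Bx n x j = 0 := dif_neg h

/-- For `n ≥ 3` and positive weights `w i j`, the `(2n-1) × (2n-1)` matrix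
`V_{η*η*}` is symmetric positive definite; in particular it is invertible. -/
theorem posdef_V (n : ℕ) (hn : 3 ≤ n) (w : Fin n → Fin n → ℝ)
    (hw : ∀ i j : Fin n, i ≠ j → 0 < w i j)
    (V : Matrix (Fin n ⊕ Fin (n - 1)) (Fin n ⊕ Fin (n - 1)) ℝ)
    (hV₁ : ∀ i : Fin n,
      V (Sum.inl i) (Sum.inl i) = ((n : ℝ) - 1)⁻¹ * ∑ j ∈ Finset.univ.erase i, w i j)
    (hV₂ : ∀ i i' : Fin n, i ≠ i' → V (Sum.inl i) (Sum.inl i') = 0)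
    (hV₃ : ∀ j : Fin (n - 1),
      V (Sum.inr j) (Sum.inr j) = ((n : ℝ) - 1)⁻¹ *
        ∑ i ∈ Finset.univ.erase (Fin.castLE (Nat.sub_le n 1) j),
          w i (Fin.castLE (Nat.sub_le n 1) j))
    (hV₄ : ∀ j j' : Fin (n - 1), j ≠ j' → V (Sum.inr j) (Sum.inr j') = 0)
    (hV₅ : ∀ (i : Fin n) (j : Fin (n - 1)), i ≠ Fin.castLE (Nat.sub_le n 1) j →
      V (Sum.inl i) (Sum.inr j) = ((n : ℝ) - 1)⁻¹ * w i (Fin.castLE (Nat.sub_le n 1) j) ∧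
      V (Sum.inr j) (Sum.inl i) = ((n : ℝ) - 1)⁻¹ * w i (Fin.castLE (Nat.sub_le n 1) j))
    (hV₆ : ∀ (i : Fin n) (j : Fin (n - 1)), i = Fin.castLE (Nat.sub_le n 1) j →
      V (Sum.inl i) (Sum.inr j) = 0 ∧ V (Sum.inr j) (Sum.inl i) = 0) :
    V.PosDef ∧ IsUnit V := by
  classical
  set c : Fin (n - 1) → Fin n := Fin.castLE (Nat.sub_le n 1) with hc
  have hninv : (0 : ℝ) < ((n : ℝ) - 1)⁻¹ := by
    apply inv_pos.mpr
    have : (3 : ℝ) ≤ (n : ℝ) := by exact_mod_cast hn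
    linarith
  -- symmetry of V
  have hsymm : ∀ p q, V q p = V p q := by
    rintro (i | j) (i' | j')
    · rcases eq_or_ne i i' with rfl | h
      · rfl
      · rw [hV₂ i' i (Ne.symm h), hV₂ i i' h]
    · by_cases h : i = c j'
      · rw [(hV₆ i j' h).2, (hV₆ i j' h).1]
      · rw [(hV₅ i j' h).2, (hV₅ i j' h).1]
    · by_cases h : i' = c j
      · rw [(hV₆ i' j h).1, (hV₆ i' j h).2]
      · rw [(hV₅ i' j h).1, (hV₅ i' j h).2]
    · rcases eq_or_ne j j' with rfl | h
      · rfl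
      · rw [hV₄ j' j (Ne.symm h), hV₄ j j' h]
  -- the key quadratic form identity
  have key : ∀ x : (Fin n ⊕ Fin (n - 1)) → ℝ,
      dotProduct x (V *ᵥ x) =
        ((n : ℝ) - 1)⁻¹ * ∑ i : Fin n, ∑ j ∈ Finset.univ.erase i,
          w i j * (x (Sum.inl i) + Bx n x j) ^ 2 := by
    intro x
    have hsplit : dotProduct x (V *ᵥ x)
        = ∑ i : Fin n, (x (Sum.inl i) * ∑ i' : Fin n, V (Sum.inl i) (Sum.inl i') * x (Sum.inl i')
            + x (Sum.inl i) * ∑ j : Fin (n-1), V (Sum.inl i) (Sum.inr j) * x (Sum.inr j))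
        + ∑ j : Fin (n-1), (x (Sum.inr j) * ∑ i : Fin n, V (Sum.inr j) (Sum.inl i) * x (Sum.inl i)
            + x (Sum.inr j) * ∑ j' : Fin (n-1), V (Sum.inr j) (Sum.inr j') * x (Sum.inr j')) := by
      simp [dotProduct, mulVec, Fintype.sum_sum_type, mul_add]
    have hblock1 : ∀ i : Fin n,
        x (Sum.inl i) * ∑ i' : Fin n, V (Sum.inl i) (Sum.inl i') * x (Sum.inl i')
        = ((n : ℝ) - 1)⁻¹ * ((∑ j ∈ Finset.univ.erase i, w i j) * x (Sum.inl i) ^ 2) := by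
      intro i
      rw [Finset.sum_eq_single i
        (fun i' _ hne => by rw [hV₂ i i' (Ne.symm hne), zero_mul])
        (fun h => absurd (Finset.mem_univ i) h), hV₁ i]
      ring
    have hblock4 : ∀ j : Fin (n - 1),
        x (Sum.inr j) * ∑ j' : Fin (n-1), V (Sum.inr j) (Sum.inr j') * x (Sum.inr j')
        = ((n : ℝ) - 1)⁻¹ * ((∑ i ∈ Finset.univ.erase (c j), w i (c j)) * x (Sum.inr j) ^ 2) := by
      intro j
      rw [Finset.sum_eq_single j
        (fun j' _ hne => by rw [hV₄ j j' (Ne.symm hne), zero_mul])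
        (fun h => absurd (Finset.mem_univ j) h), hV₃ j]
      ring
    have hcross1 : ∀ i : Fin n,
        x (Sum.inl i) * ∑ j : Fin (n-1), V (Sum.inl i) (Sum.inr j) * x (Sum.inr j)
        = ((n : ℝ) - 1)⁻¹ * ∑ j : Fin (n-1),
            (if c j = i then 0 else w i (c j) * x (Sum.inl i) * x (Sum.inr j)) := by
      intro i
      rw [Finset.mul_sum, Finset.mul_sum]
      refine Finset.sum_congr rfl fun j _ => ?_
      by_cases h : i = c j
      · rw [(hV₆ i j h).1, if_pos h.symm]
        ring
      · rw [(hV₅ i j h).1, if_neg (fun hh => h hh.symm)]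
        ring
    have hcross2 : ∀ j : Fin (n - 1),
        x (Sum.inr j) * ∑ i : Fin n, V (Sum.inr j) (Sum.inl i) * x (Sum.inl i)
        = ((n : ℝ) - 1)⁻¹ * ∑ i : Fin n,
            (if c j = i then 0 else w i (c j) * x (Sum.inl i) * x (Sum.inr j)) := by
      intro j
      rw [Finset.mul_sum, Finset.mul_sum]
      refine Finset.sum_congr rfl fun i _ => ?_
      by_cases h : i = c j
      · rw [(hV₆ i j h).2, if_pos h.symm]
        ring
      · rw [(hV₅ i j h).2, if_neg (fun hh => h hh.symm)]
        ring
    -- named big sums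
    set A := ∑ i : Fin n, (∑ j ∈ Finset.univ.erase i, w i j) * x (Sum.inl i) ^ 2 with hA
    set Bq := ∑ j : Fin (n-1), (∑ i ∈ Finset.univ.erase (c j), w i (c j)) * x (Sum.inr j) ^ 2
      with hBq
    set C := ∑ i : Fin n, ∑ j : Fin (n-1),
        (if c j = i then 0 else w i (c j) * x (Sum.inl i) * x (Sum.inr j)) with hC
    have hL : dotProduct x (V *ᵥ x) = ((n : ℝ) - 1)⁻¹ * (A + Bq + 2 * C) := by
      rw [hsplit]
      rw [Finset.sum_add_distrib, Finset.sum_add_distrib]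
      have e1 : ∑ i : Fin n,
          x (Sum.inl i) * ∑ i' : Fin n, V (Sum.inl i) (Sum.inl i') * x (Sum.inl i')
          = ((n : ℝ) - 1)⁻¹ * A := by
        rw [Finset.mul_sum]
        exact Finset.sum_congr rfl fun i _ => hblock1 i
      have e2 : ∑ i : Fin n,
          x (Sum.inl i) * ∑ j : Fin (n-1), V (Sum.inl i) (Sum.inr j) * x (Sum.inr j)
          = ((n : ℝ) - 1)⁻¹ * C := by
        rw [hC, Finset.mul_sum]
        exact Finset.sum_congr rfl fun i _ => hcross1 i
      have e3 : ∑ j : Fin (n-1),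
          x (Sum.inr j) * ∑ i : Fin n, V (Sum.inr j) (Sum.inl i) * x (Sum.inl i)
          = ((n : ℝ) - 1)⁻¹ * C := by
        have : C = ∑ j : Fin (n-1), ∑ i : Fin n,
            (if c j = i then 0 else w i (c j) * x (Sum.inl i) * x (Sum.inr j)) := by
          rw [hC]; exact Finset.sum_comm
        rw [this, Finset.mul_sum]
        exact Finset.sum_congr rfl fun j _ => hcross2 j
      have e4 : ∑ j : Fin (n-1),
          x (Sum.inr j) * ∑ j' : Fin (n-1), V (Sum.inr j) (Sum.inr j') * x (Sum.inr j')
          = ((n : ℝ) - 1)⁻¹ * Bq := by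
        rw [Finset.mul_sum]
        exact Finset.sum_congr rfl fun j _ => hblock4 j
      rw [e1, e2, e3, e4]
      ring
    have hR : ∑ i : Fin n, ∑ j ∈ Finset.univ.erase i,
        w i j * (x (Sum.inl i) + Bx n x j) ^ 2 = A + Bq + 2 * C := by
      have hexp : ∀ i : Fin n, ∑ j ∈ Finset.univ.erase i,
          w i j * (x (Sum.inl i) + Bx n x j) ^ 2
          = ∑ j ∈ Finset.univ.erase i, (w i j * x (Sum.inl i) ^ 2
              + (w i j * Bx n x j ^ 2 + 2 * (w i j * x (Sum.inl i) * Bx n x j))) :=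
        fun i => Finset.sum_congr rfl fun j _ => by ring
      calc ∑ i : Fin n, ∑ j ∈ Finset.univ.erase i, w i j * (x (Sum.inl i) + Bx n x j) ^ 2
          = ∑ i : Fin n, ((∑ j ∈ Finset.univ.erase i, w i j * x (Sum.inl i) ^ 2)
            + ((∑ j ∈ Finset.univ.erase i, w i j * Bx n x j ^ 2)
              + ∑ j ∈ Finset.univ.erase i, 2 * (w i j * x (Sum.inl i) * Bx n x j))) := by
            refine Finset.sum_congr rfl fun i _ => ?_
            rw [hexp i, Finset.sum_add_distrib, Finset.sum_add_distrib]
        _ = (∑ i : Fin n, ∑ j ∈ Finset.univ.erase i, w i j * x (Sum.inl i) ^ 2)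
            + ((∑ i : Fin n, ∑ j ∈ Finset.univ.erase i, w i j * Bx n x j ^ 2)
              + ∑ i : Fin n, ∑ j ∈ Finset.univ.erase i,
                  2 * (w i j * x (Sum.inl i) * Bx n x j)) := by
            rw [Finset.sum_add_distrib, Finset.sum_add_distrib]
        _ = A + Bq + 2 * C := by
            have p1 : ∑ i : Fin n, ∑ j ∈ Finset.univ.erase i, w i j * x (Sum.inl i) ^ 2 = A := by
              exact Finset.sum_congr rfl fun i _ => (Finset.sum_mul _ _ _).symm
            have p2 : ∑ i : Fin n, ∑ j ∈ Finset.univ.erase i, w i j * Bx n x j ^ 2 = Bq := by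
              have step1 : ∑ i : Fin n, ∑ j ∈ Finset.univ.erase i, w i j * Bx n x j ^ 2
                  = ∑ j : Fin n, (∑ i ∈ Finset.univ.erase j, w i j) * Bx n x j ^ 2 := by
                rw [Finset.sum_congr rfl
                  (fun i (_ : i ∈ Finset.univ) => sum_ite_of_erase i
                    (fun j => w i j * Bx n x j ^ 2)), Finset.sum_comm]
                refine Finset.sum_congr rfl fun j _ => ?_
                rw [Finset.sum_mul, sum_ite_of_erase j (fun i => w i j * Bx n x j ^ 2)]
                refine Finset.sum_congr rfl fun i _ => ?_
                rcases eq_or_ne i j with rfl | h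
                · rfl
                · rw [if_neg (fun hh => h hh.symm), if_neg h]
              rw [step1]
              rw [sum_fin_pred (fun j => (∑ i ∈ Finset.univ.erase j, w i j) * Bx n x j ^ 2)
                (fun j hj => by simp [Bx_zero n x j hj])]
              refine Finset.sum_congr rfl fun j _ => ?_
              show (∑ i ∈ Finset.univ.erase (c j), w i (c j)) * Bx n x (c j) ^ 2 = _
              rw [Bx_castLE]
            have p3 : ∑ i : Fin n, ∑ j ∈ Finset.univ.erase i,
                2 * (w i j * x (Sum.inl i) * Bx n x j) = 2 * C := by
              rw [hC, Finset.mul_sum]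
              refine Finset.sum_congr rfl fun i _ => ?_
              rw [sum_ite_of_erase i (fun j => 2 * (w i j * x (Sum.inl i) * Bx n x j))]
              rw [sum_fin_pred (fun j => if j = i then 0
                  else 2 * (w i j * x (Sum.inl i) * Bx n x j))
                (fun j hj => by
                  by_cases h : j = i
                  · simp [h]
                  · simp [h, Bx_zero n x j hj])]
              rw [Finset.mul_sum]
              refine Finset.sum_congr rfl fun j _ => ?_
              show (if c j = i then 0 else 2 * (w i (c j) * x (Sum.inl i) * Bx n x (c j)))
                = 2 * (if c j = i then 0 else w i (c j) * x (Sum.inl i) * x (Sum.inr j))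
              rcases eq_or_ne (c j) i with h | h
              · rw [if_pos h, if_pos h, mul_zero]
              · rw [if_neg h, if_neg h, Bx_castLE]
            rw [p1, p2, p3]
            ring
    rw [hL, hR]
  -- positive definiteness
  have hpd : V.PosDef := by
    refine Matrix.PosDef.of_dotProduct_mulVec_pos ?_ ?_
    · ext p q
      rw [Matrix.conjTranspose_apply, star_trivial]
      exact hsymm p q
    · intro x hx
      have hsx : star x = x := by funext p; simp
      rw [hsx, key x]
      apply mul_pos hninv
      have hterm : ∀ i : Fin n, ∀ j ∈ Finset.univ.erase i,
          0 ≤ w i j * (x (Sum.inl i) + Bx n x j) ^ 2 := fun i j hj =>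
        mul_nonneg (le_of_lt (hw i j (Ne.symm (Finset.ne_of_mem_erase hj)))) (sq_nonneg _)
      have hnonneg : ∀ i ∈ (Finset.univ : Finset (Fin n)),
          0 ≤ ∑ j ∈ Finset.univ.erase i, w i j * (x (Sum.inl i) + Bx n x j) ^ 2 :=
        fun i _ => Finset.sum_nonneg (hterm i)
      rcases lt_or_eq_of_le (Finset.sum_nonneg hnonneg) with h | h
      · exact h
      exfalso
      -- all terms vanish
      have hz : ∀ i : Fin n, ∀ j ∈ Finset.univ.erase i,
          x (Sum.inl i) + Bx n x j = 0 := by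
        intro i j hj
        have h1 := (Finset.sum_eq_zero_iff_of_nonneg hnonneg).mp h.symm i (Finset.mem_univ i)
        have h2 := (Finset.sum_eq_zero_iff_of_nonneg (hterm i)).mp h1 j hj
        have hwij : 0 < w i j := hw i j (Ne.symm (Finset.ne_of_mem_erase hj))
        have := (mul_eq_zero.mp h2).resolve_left (ne_of_gt hwij)
        exact pow_eq_zero_iff (by norm_num) |>.mp this
      set j₀ : Fin n := ⟨n - 1, by omega⟩ with hj₀
      have hBj₀ : Bx n x j₀ = 0 := Bx_zero n x j₀ (by simp [hj₀])
      have ha : ∀ i : Fin n, i ≠ j₀ → x (Sum.inl i) = 0 := by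
        intro i hi
        have := hz i j₀ (Finset.mem_erase.mpr ⟨fun hh => absurd hh.symm hi, Finset.mem_univ _⟩)
        rw [hBj₀, add_zero] at this
        exact this
      have hcj : ∀ j : Fin (n - 1), c j ≠ j₀ := by
        intro j hh
        have : (j : ℕ) = n - 1 := by
          have := congrArg Fin.val hh
          simpa [hc, hj₀] using this
        omega
      have hb : ∀ j : Fin (n - 1), x (Sum.inr j) = 0 := by
        intro j
        obtain ⟨i, hi_mem, hi_ne⟩ := Finset.exists_mem_ne
          (s := Finset.univ.erase (c j)) (by
            rw [Finset.card_erase_of_mem (Finset.mem_univ _), Finset.card_univ, Fintype.card_fin]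
            omega) j₀
        have hine : i ≠ c j := Finset.ne_of_mem_erase hi_mem
        have hz' := hz i (c j) (Finset.mem_erase.mpr ⟨fun hh => hine hh.symm, Finset.mem_univ _⟩)
        rw [ha i hi_ne, zero_add, Bx_castLE] at hz'
        exact hz'
      have haj₀ : x (Sum.inl j₀) = 0 := by
        have hne : (0 : ℕ) < n - 1 := by omega
        set j' : Fin (n - 1) := ⟨0, hne⟩ with hj'
        have hz' := hz j₀ (c j')
          (Finset.mem_erase.mpr ⟨fun hh => hcj j' hh, Finset.mem_univ _⟩)
        rw [Bx_castLE, hb j', add_zero] at hz'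
        exact hz'
      apply hx
      funext p
      rcases p with i | j
      · by_cases h : i = j₀
        · rw [h]; exact haj₀
        · exact ha i h
      · exact hb j
  exact ⟨hpd, hpd.isUnit⟩
end

section
/- Let n ≥ 3 and let c_{ij} > 0 for all 1 ≤ i ≠ j ≤ n. Define Φ : ℝ^{2n−1} → ℝ^{2n−1} on points η = (α_1,…,α_n, β_1,…,β_{n−1}), with the convention β_n := 0, by Φ_i(η) = exp(α_i) Σ_{j≠i} c_{ij} exp(β_j) for i ∈ {1,…,n} and Φ_{n+j}(η) = exp(β_j) Σ_{i≠j} c_{ij} exp(α_i) for j ∈ {1,…,n−1}. Then Φ is differentiable everywhere, its Jacobian matrix at every η is symmetric, and it is positive definite: for every η and every nonzero v ∈ ℝ^{2n−1}, ⟨DΦ(η)[v], v⟩ > 0. -/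
open scoped RealInnerProductSpace

open Finset

namespace JacAux

noncomputable section

variable {m : ℕ}

abbrev E (m : ℕ) := EuclideanSpace ℝ (Fin (m + 1) ⊕ Fin m)

/-- extended "beta" coordinate, with the last one fixed to `0`. -/
def bb (m : ℕ) (x : E m) (j : Fin (m + 1)) : ℝ :=
  if h : (j : ℕ) < m then x (Sum.inr ⟨(j : ℕ), h⟩) else 0

def Bc (m : ℕ) (j : Fin (m + 1)) : E m →L[ℝ] ℝ :=
  if h : (j : ℕ) < m then EuclideanSpace.proj (Sum.inr ⟨(j : ℕ), h⟩) else 0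

lemma Bc_apply (x : E m) (j : Fin (m + 1)) : Bc m j x = bb m x j := by
  unfold Bc bb; split_ifs with h <;> simp

lemma bb_castSucc (x : E m) (j : Fin m) : bb m x j.castSucc = x (Sum.inr j) := by
  have h : ((j.castSucc : Fin (m + 1)) : ℕ) < m := by simpa using j.isLt
  rw [bb, dif_pos h]
  rfl

lemma bb_last (x : E m) : bb m x (Fin.last m) = 0 := dif_neg (by simp)

lemma coordL (c : Fin (m + 1) → Fin (m + 1) → ℝ) (η : E m) (i : Fin (m + 1)) :
    ∃ D : E m →L[ℝ] ℝ,
      HasFDerivAt (fun x : E m => Real.exp (x (Sum.inl i)) *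
          ∑ j ∈ univ.erase i, c i j * Real.exp (bb m x j)) D η ∧
      ∀ v : E m, D v = ∑ j ∈ univ.erase i,
          c i j * Real.exp (η (Sum.inl i)) * Real.exp (bb m η j) *
            (v (Sum.inl i) + bb m v j) := by
  have hA : HasFDerivAt (fun x : E m => Real.exp (x (Sum.inl i)))
      (Real.exp (η (Sum.inl i)) •
        (EuclideanSpace.proj (Sum.inl i) : E m →L[ℝ] ℝ)) η :=
    (EuclideanSpace.proj (Sum.inl i) : E m →L[ℝ] ℝ).hasFDerivAt.exp
  have hB : HasFDerivAt (fun x : E m => ∑ j ∈ univ.erase i, c i j * Real.exp (bb m x j))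
      (∑ j ∈ univ.erase i, c i j • (Real.exp (bb m η j) • Bc m j)) η := by
    refine HasFDerivAt.fun_sum fun j _ => ?_
    have h := ((Bc m j).hasFDerivAt (x := η)).exp.const_mul (c i j)
    simpa [Bc_apply] using h
  refine ⟨_, hA.mul hB, fun v => ?_⟩
  simp only [ContinuousLinearMap.add_apply, ContinuousLinearMap.coe_smul',
    Pi.smul_apply, ContinuousLinearMap.coe_sum', Finset.sum_apply, smul_eq_mul,
    Bc_apply, PiLp.proj_apply]
  rw [Finset.mul_sum, Finset.sum_mul, ← Finset.sum_add_distrib]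
  exact Finset.sum_congr rfl fun j _ => by ring

lemma coordR (c : Fin (m + 1) → Fin (m + 1) → ℝ) (η : E m) (j : Fin m) :
    ∃ D : E m →L[ℝ] ℝ,
      HasFDerivAt (fun x : E m => Real.exp (x (Sum.inr j)) *
          ∑ i ∈ univ.erase j.castSucc, c i j.castSucc * Real.exp (x (Sum.inl i))) D η ∧
      ∀ v : E m, D v = ∑ i ∈ univ.erase j.castSucc,
          c i j.castSucc * Real.exp (η (Sum.inl i)) * Real.exp (η (Sum.inr j)) *
            (v (Sum.inl i) + v (Sum.inr j)) := by
  have hA : HasFDerivAt (fun x : E m => Real.exp (x (Sum.inr j)))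
      (Real.exp (η (Sum.inr j)) •
        (EuclideanSpace.proj (Sum.inr j) : E m →L[ℝ] ℝ)) η :=
    (EuclideanSpace.proj (Sum.inr j) : E m →L[ℝ] ℝ).hasFDerivAt.exp
  have hB : HasFDerivAt
      (fun x : E m => ∑ i ∈ univ.erase j.castSucc, c i j.castSucc * Real.exp (x (Sum.inl i)))
      (∑ i ∈ univ.erase j.castSucc, c i j.castSucc •
        (Real.exp (η (Sum.inl i)) •
          (EuclideanSpace.proj (Sum.inl i) : E m →L[ℝ] ℝ))) η := by
    refine HasFDerivAt.fun_sum fun i _ => ?_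
    exact ((EuclideanSpace.proj (Sum.inl i) : E m →L[ℝ] ℝ).hasFDerivAt.exp).const_mul
      (c i j.castSucc)
  refine ⟨_, hA.mul hB, fun v => ?_⟩
  simp only [ContinuousLinearMap.add_apply, ContinuousLinearMap.coe_smul',
    Pi.smul_apply, ContinuousLinearMap.coe_sum', Finset.sum_apply, smul_eq_mul,
    PiLp.proj_apply]
  rw [Finset.mul_sum, Finset.sum_mul, ← Finset.sum_add_distrib]
  exact Finset.sum_congr rfl fun i _ => by ring

lemma sum_erase_swap {k : ℕ} (g : Fin k → Fin k → ℝ) :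
    ∑ j, ∑ i ∈ univ.erase j, g i j = ∑ i, ∑ j ∈ univ.erase i, g i j := by
  have h1 : ∀ j : Fin k, ∑ i ∈ univ.erase j, g i j
      = ∑ i, if i ≠ j then g i j else 0 := fun j => by
    rw [← Finset.filter_ne', Finset.sum_filter]
  have h2 : ∀ i : Fin k, ∑ j ∈ univ.erase i, g i j
      = ∑ j, if j ≠ i then g i j else 0 := fun i => by
    rw [← Finset.filter_ne', Finset.sum_filter]
  simp only [h1, h2]
  rw [Finset.sum_comm]
  refine Finset.sum_congr rfl fun i _ => Finset.sum_congr rfl fun j _ => ?_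
  rcases eq_or_ne i j with h | h
  · simp [h]
  · simp [h, h.symm]

theorem aux (m : ℕ) (hm : 2 ≤ m) (c : Fin (m + 1) → Fin (m + 1) → ℝ)
    (hc : ∀ i j : Fin (m + 1), i ≠ j → 0 < c i j) (Φ : E m → E m)
    (h1 : ∀ (η : E m) (i : Fin (m + 1)), Φ η (Sum.inl i) =
      Real.exp (η (Sum.inl i)) * ∑ j ∈ univ.erase i, c i j * Real.exp (bb m η j))
    (h2 : ∀ (η : E m) (j : Fin m), Φ η (Sum.inr j) =
      Real.exp (η (Sum.inr j)) *
        ∑ i ∈ univ.erase j.castSucc, c i j.castSucc * Real.exp (η (Sum.inl i))) :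
    Differentiable ℝ Φ ∧
    (∀ η v u : E m, ⟪fderiv ℝ Φ η v, u⟫ = ⟪v, fderiv ℝ Φ η u⟫) ∧
    (∀ η v : E m, v ≠ 0 → 0 < ⟪fderiv ℝ Φ η v, v⟫) := by
  have hfunL : ∀ i : Fin (m + 1), (fun x : E m => Φ x (Sum.inl i)) =
      fun x => Real.exp (x (Sum.inl i)) * ∑ j ∈ univ.erase i, c i j * Real.exp (bb m x j) :=
    fun i => funext fun x => h1 x i
  have hfunR : ∀ j : Fin m, (fun x : E m => Φ x (Sum.inr j)) =
      fun x => Real.exp (x (Sum.inr j)) *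
        ∑ i ∈ univ.erase j.castSucc, c i j.castSucc * Real.exp (x (Sum.inl i)) :=
    fun j => funext fun x => h2 x j
  have hdiff : Differentiable ℝ Φ := by
    rw [differentiable_euclidean]
    rintro (i | j)
    · rw [hfunL i]
      exact fun η => (coordL c η i).choose_spec.1.differentiableAt
    · rw [hfunR j]
      exact fun η => (coordR c η j).choose_spec.1.differentiableAt
  have hQ : ∀ η v u : E m, ⟪fderiv ℝ Φ η v, u⟫ =
      ∑ i, ∑ j ∈ univ.erase i,
        (c i j * Real.exp (η (Sum.inl i)) * Real.exp (bb m η j)) *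
          ((v (Sum.inl i) + bb m v j) * (u (Sum.inl i) + bb m u j)) := by
    intro η v u
    have hH : HasFDerivAt Φ (fderiv ℝ Φ η) η := (hdiff η).hasFDerivAt
    rw [← hasFDerivWithinAt_univ, hasFDerivWithinAt_euclidean] at hH
    have hL : ∀ i : Fin (m + 1), fderiv ℝ Φ η v (Sum.inl i)
        = ∑ j ∈ univ.erase i, c i j * Real.exp (η (Sum.inl i)) * Real.exp (bb m η j) *
            (v (Sum.inl i) + bb m v j) := by
      intro i
      obtain ⟨D, hD, hval⟩ := coordL c η i
      have h' : HasFDerivAt (fun x : E m => Φ x (Sum.inl i))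
          (PiLp.proj 2 _ (Sum.inl i) ∘L fderiv ℝ Φ η) η := by
        rw [← hasFDerivWithinAt_univ]; exact hH (Sum.inl i)
      rw [hfunL i] at h'
      have heq := h'.unique hD
      calc fderiv ℝ Φ η v (Sum.inl i)
          = (PiLp.proj 2 _ (Sum.inl i) ∘L fderiv ℝ Φ η) v := rfl
        _ = D v := by rw [heq]
        _ = _ := hval v
    have hR : ∀ j : Fin m, fderiv ℝ Φ η v (Sum.inr j)
        = ∑ i ∈ univ.erase j.castSucc,
            c i j.castSucc * Real.exp (η (Sum.inl i)) * Real.exp (η (Sum.inr j)) *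
              (v (Sum.inl i) + v (Sum.inr j)) := by
      intro j
      obtain ⟨D, hD, hval⟩ := coordR c η j
      have h' : HasFDerivAt (fun x : E m => Φ x (Sum.inr j))
          (PiLp.proj 2 _ (Sum.inr j) ∘L fderiv ℝ Φ η) η := by
        rw [← hasFDerivWithinAt_univ]; exact hH (Sum.inr j)
      rw [hfunR j] at h'
      have heq := h'.unique hD
      calc fderiv ℝ Φ η v (Sum.inr j)
          = (PiLp.proj 2 _ (Sum.inr j) ∘L fderiv ℝ Φ η) v := rfl
        _ = D v := by rw [heq]
        _ = _ := hval v
    rw [PiLp.inner_apply]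
    simp only [RCLike.inner_apply, starRingEnd_apply, star_trivial]
    rw [Fintype.sum_sum_type]
    simp only [hL, hR]
    -- left block
    have hleft : ∀ i : Fin (m + 1),
        (∑ j ∈ univ.erase i, c i j * Real.exp (η (Sum.inl i)) * Real.exp (bb m η j) *
          (v (Sum.inl i) + bb m v j)) * u (Sum.inl i)
        = ∑ j ∈ univ.erase i,
            c i j * Real.exp (η (Sum.inl i)) * Real.exp (bb m η j) *
              (v (Sum.inl i) + bb m v j) * u (Sum.inl i) := fun i => Finset.sum_mul ..
    -- right block
    set G : Fin (m + 1) → ℝ := fun j' => ∑ i ∈ univ.erase j',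
      c i j' * Real.exp (η (Sum.inl i)) * Real.exp (bb m η j') *
        (v (Sum.inl i) + bb m v j') * bb m u j' with hG
    have hright : ∀ j : Fin m,
        (∑ i ∈ univ.erase j.castSucc,
          c i j.castSucc * Real.exp (η (Sum.inl i)) * Real.exp (η (Sum.inr j)) *
            (v (Sum.inl i) + v (Sum.inr j))) * u (Sum.inr j) = G j.castSucc := by
      intro j
      rw [hG]
      rw [Finset.sum_mul]
      refine Finset.sum_congr rfl fun i _ => ?_
      rw [bb_castSucc, bb_castSucc, bb_castSucc]
    have hGlast : G (Fin.last m) = 0 := by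
      rw [hG]
      exact Finset.sum_eq_zero fun i _ => by simp [bb_last]
    have hrsum : ∑ j : Fin m, G j.castSucc = ∑ j' : Fin (m + 1), G j' := by
      rw [Fin.sum_univ_castSucc, hGlast, add_zero]
    simp only [mul_comm (u _), hleft, hright]
    rw [hrsum, hG, sum_erase_swap (fun i j' =>
      c i j' * Real.exp (η (Sum.inl i)) * Real.exp (bb m η j') *
        (v (Sum.inl i) + bb m v j') * bb m u j'), ← Finset.sum_add_distrib]
    refine Finset.sum_congr rfl fun i _ => ?_
    rw [← Finset.sum_add_distrib]
    exact Finset.sum_congr rfl fun j _ => by ring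
  refine ⟨hdiff, fun η v u => ?_, fun η v hv => ?_⟩
  · rw [hQ, real_inner_comm, hQ]
    exact Finset.sum_congr rfl fun i _ => Finset.sum_congr rfl fun j _ => by ring
  · rw [hQ]
    have hW : ∀ i : Fin (m + 1), ∀ j ∈ univ.erase i,
        0 < c i j * Real.exp (η (Sum.inl i)) * Real.exp (bb m η j) := by
      intro i j hj
      have hne : i ≠ j := ((Finset.mem_erase.mp hj).1).symm
      exact mul_pos (mul_pos (hc i j hne) (Real.exp_pos _)) (Real.exp_pos _)
    have hnn : ∀ i : Fin (m + 1), ∀ j ∈ univ.erase i,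
        0 ≤ (c i j * Real.exp (η (Sum.inl i)) * Real.exp (bb m η j)) *
          ((v (Sum.inl i) + bb m v j) * (v (Sum.inl i) + bb m v j)) :=
      fun i j hj => mul_nonneg (hW i j hj).le (mul_self_nonneg _)
    have hQnn : 0 ≤ ∑ i, ∑ j ∈ univ.erase i,
        (c i j * Real.exp (η (Sum.inl i)) * Real.exp (bb m η j)) *
          ((v (Sum.inl i) + bb m v j) * (v (Sum.inl i) + bb m v j)) :=
      Finset.sum_nonneg fun i _ => Finset.sum_nonneg (hnn i)
    rcases hQnn.lt_or_eq with h | h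
    · exact h
    · exfalso
      apply hv
      have hterm : ∀ i : Fin (m + 1), ∀ j ∈ univ.erase i,
          (c i j * Real.exp (η (Sum.inl i)) * Real.exp (bb m η j)) *
            ((v (Sum.inl i) + bb m v j) * (v (Sum.inl i) + bb m v j)) = 0 := by
        have h0 := (Finset.sum_eq_zero_iff_of_nonneg
          (fun i _ => Finset.sum_nonneg (hnn i))).mp h.symm
        intro i j hj
        exact (Finset.sum_eq_zero_iff_of_nonneg (hnn i)).mp (h0 i (mem_univ i)) j hj
      have hz : ∀ i j : Fin (m + 1), i ≠ j → v (Sum.inl i) + bb m v j = 0 := by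
        intro i j hij
        have hj : j ∈ univ.erase i := Finset.mem_erase.mpr ⟨hij.symm, mem_univ j⟩
        have := hterm i j hj
        rcases mul_eq_zero.mp this with h' | h'
        · exact absurd h' (hW i j hj).ne'
        · rcases mul_self_eq_zero.mp h' with h''
          exact h''
      have hv1 : ((1 : Fin (m + 1)) : ℕ) = 1 := by
        rw [Fin.val_one']
        exact Nat.mod_eq_of_lt (by omega)
      have h0l : (0 : Fin (m + 1)) ≠ Fin.last m := by
        rw [Fin.ne_iff_vne, Fin.val_zero, Fin.val_last]; omega
      have h1l : (1 : Fin (m + 1)) ≠ Fin.last m := by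
        rw [Fin.ne_iff_vne, hv1, Fin.val_last]; omega
      have h10 : (1 : Fin (m + 1)) ≠ 0 := by
        rw [Fin.ne_iff_vne, hv1, Fin.val_zero]; omega
      have hαz : ∀ i : Fin (m + 1), i ≠ Fin.last m → v (Sum.inl i) = 0 := by
        intro i hi
        have := hz i (Fin.last m) hi
        rwa [bb_last, add_zero] at this
      have hβz : ∀ j : Fin m, v (Sum.inr j) = 0 := by
        intro j
        have hjl : j.castSucc ≠ Fin.last m := by
          rw [Fin.ne_iff_vne]; simpa using j.isLt.ne
        by_cases hj0 : j.castSucc = 0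
        · have := hz 1 j.castSucc (by rw [hj0]; exact h10)
          rw [hαz 1 h1l, zero_add, bb_castSucc] at this
          exact this
        · have := hz 0 j.castSucc (fun h => hj0 h.symm)
          rw [hαz 0 h0l, zero_add, bb_castSucc] at this
          exact this
      have hαl : v (Sum.inl (Fin.last m)) = 0 := by
        have hj : (Fin.last m) ≠ (⟨0, by omega⟩ : Fin m).castSucc := by
          rw [Fin.ne_iff_vne]; simp; omega
        have := hz (Fin.last m) (⟨0, by omega⟩ : Fin m).castSucc hj
        rw [bb_castSucc, hβz, add_zero] at this
        exact this
      ext k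
      rcases k with i | j
      · rcases eq_or_ne i (Fin.last m) with h' | h'
        · rw [h']; exact hαl
        · exact hαz i h'
      · exact hβz j

end

end JacAux


/-- The map `Φ` given by the local estimating equations for the degree
parameters (with `βₙ := 0`) is differentiable, and its Jacobian at every point
is symmetric and positive definite. -/
theorem jacobian_symm_posdef (n : ℕ) (hn : 3 ≤ n) (c : Fin n → Fin n → ℝ)
    (hc : ∀ i j : Fin n, i ≠ j → 0 < c i j)
    (Φ : EuclideanSpace ℝ (Fin n ⊕ Fin (n - 1)) → EuclideanSpace ℝ (Fin n ⊕ Fin (n - 1)))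
    (hΦ₁ : ∀ (η : EuclideanSpace ℝ (Fin n ⊕ Fin (n - 1))) (i : Fin n),
      Φ η (Sum.inl i) = Real.exp (η (Sum.inl i)) *
        ∑ j ∈ Finset.univ.erase i,
          c i j * Real.exp (if h : (j : ℕ) < n - 1 then η (Sum.inr ⟨j, h⟩) else 0))
    (hΦ₂ : ∀ (η : EuclideanSpace ℝ (Fin n ⊕ Fin (n - 1))) (j : Fin (n - 1)),
      Φ η (Sum.inr j) = Real.exp (η (Sum.inr j)) *
        ∑ i ∈ Finset.univ.erase (Fin.castLE (Nat.sub_le n 1) j),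
          c i (Fin.castLE (Nat.sub_le n 1) j) * Real.exp (η (Sum.inl i))) :
    Differentiable ℝ Φ ∧
    (∀ (η : EuclideanSpace ℝ (Fin n ⊕ Fin (n - 1)))
        (v u : EuclideanSpace ℝ (Fin n ⊕ Fin (n - 1))),
      ⟪fderiv ℝ Φ η v, u⟫ = ⟪v, fderiv ℝ Φ η u⟫) ∧
    (∀ (η : EuclideanSpace ℝ (Fin n ⊕ Fin (n - 1)))
        (v : EuclideanSpace ℝ (Fin n ⊕ Fin (n - 1))), v ≠ 0 →
      0 < ⟪fderiv ℝ Φ η v, v⟫) := by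
  obtain ⟨m, rfl⟩ : ∃ m, n = m + 1 := ⟨n - 1, by omega⟩
  exact JacAux.aux m (by omega) c hc Φ (fun η i => hΦ₁ η i) (fun η j => hΦ₂ η j)
end

section
/- Let n ≥ 3, let a_i > 0 for i ∈ {1,…,n}, let b_j > 0 for j ∈ {1,…,n−1}, and let c_{ij} > 0 for all 1 ≤ i ≠ j ≤ n. Consider the system of 2n−1 equations in the unknowns (α_1,…,α_n, β_1,…,β_{n−1}) ∈ ℝ^{2n−1}, with the convention β_n := 0: exp(α_i) Σ_{j≠i} c_{ij} exp(β_j) = a_i for every i ∈ {1,…,n}, and exp(β_j) Σ_{i≠j} c_{ij} exp(α_i) = b_j for every j ∈ {1,…,n−1}. Then this system has at most one solution. -/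
private lemma aux_le {n : ℕ} (s : Finset (Fin n)) (hs : s.Nonempty)
    (w x y : Fin n → ℝ) (hw : ∀ j ∈ s, 0 < w j) (A A' t : ℝ)
    (heq : Real.exp A * ∑ j ∈ s, w j * Real.exp (x j)
         = Real.exp A' * ∑ j ∈ s, w j * Real.exp (y j))
    (ht : ∀ j ∈ s, t ≤ x j - y j) :
    A - A' ≤ -t := by
  have hS : 0 < ∑ j ∈ s, w j * Real.exp (x j) :=
    Finset.sum_pos (fun j hj => mul_pos (hw j hj) (Real.exp_pos _)) hs
  have hle : ∑ j ∈ s, w j * Real.exp (y j)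
      ≤ ∑ j ∈ s, Real.exp (-t) * (w j * Real.exp (x j)) := by
    refine Finset.sum_le_sum fun j hj => ?_
    have h1 : Real.exp (y j) ≤ Real.exp (-t) * Real.exp (x j) := by
      rw [← Real.exp_add]
      exact Real.exp_le_exp.2 (by linarith [ht j hj])
    calc w j * Real.exp (y j) ≤ w j * (Real.exp (-t) * Real.exp (x j)) :=
          mul_le_mul_of_nonneg_left h1 (hw j hj).le
      _ = Real.exp (-t) * (w j * Real.exp (x j)) := by ring
  have h2 : Real.exp A * ∑ j ∈ s, w j * Real.exp (x j)
      ≤ Real.exp (A' + -t) * ∑ j ∈ s, w j * Real.exp (x j) := by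
    rw [heq, Real.exp_add]
    calc Real.exp A' * ∑ j ∈ s, w j * Real.exp (y j)
        ≤ Real.exp A' * ∑ j ∈ s, Real.exp (-t) * (w j * Real.exp (x j)) :=
          mul_le_mul_of_nonneg_left hle (Real.exp_pos A').le
      _ = Real.exp A' * Real.exp (-t) * ∑ j ∈ s, w j * Real.exp (x j) := by
          rw [← Finset.mul_sum, mul_assoc]
  have h3 : Real.exp A ≤ Real.exp (A' + -t) := le_of_mul_le_mul_right h2 hS
  have := Real.exp_le_exp.1 h3
  linarith

private lemma aux_lt {n : ℕ} (s : Finset (Fin n))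
    (w x y : Fin n → ℝ) (hw : ∀ j ∈ s, 0 < w j) (A A' t : ℝ)
    (heq : Real.exp A * ∑ j ∈ s, w j * Real.exp (x j)
         = Real.exp A' * ∑ j ∈ s, w j * Real.exp (y j))
    (ht : ∀ j ∈ s, t ≤ x j - y j)
    (j0 : Fin n) (hj0 : j0 ∈ s) (hstrict : t < x j0 - y j0) :
    A - A' < -t := by
  have hS : 0 < ∑ j ∈ s, w j * Real.exp (x j) :=
    Finset.sum_pos (fun j hj => mul_pos (hw j hj) (Real.exp_pos _)) ⟨j0, hj0⟩
  have hlt : ∑ j ∈ s, w j * Real.exp (y j)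
      < ∑ j ∈ s, Real.exp (-t) * (w j * Real.exp (x j)) := by
    refine Finset.sum_lt_sum (fun j hj => ?_) ⟨j0, hj0, ?_⟩
    · have h1 : Real.exp (y j) ≤ Real.exp (-t) * Real.exp (x j) := by
        rw [← Real.exp_add]
        exact Real.exp_le_exp.2 (by linarith [ht j hj])
      calc w j * Real.exp (y j) ≤ w j * (Real.exp (-t) * Real.exp (x j)) :=
            mul_le_mul_of_nonneg_left h1 (hw j hj).le
        _ = Real.exp (-t) * (w j * Real.exp (x j)) := by ring
    · have h1 : Real.exp (y j0) < Real.exp (-t) * Real.exp (x j0) := by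
        rw [← Real.exp_add]
        exact Real.exp_lt_exp.2 (by linarith)
      calc w j0 * Real.exp (y j0) < w j0 * (Real.exp (-t) * Real.exp (x j0)) :=
            mul_lt_mul_of_pos_left h1 (hw j0 hj0)
        _ = Real.exp (-t) * (w j0 * Real.exp (x j0)) := by ring
  have h2 : Real.exp A * ∑ j ∈ s, w j * Real.exp (x j)
      < Real.exp (A' + -t) * ∑ j ∈ s, w j * Real.exp (x j) := by
    rw [heq, Real.exp_add]
    calc Real.exp A' * ∑ j ∈ s, w j * Real.exp (y j)
        < Real.exp A' * ∑ j ∈ s, Real.exp (-t) * (w j * Real.exp (x j)) :=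
          mul_lt_mul_of_pos_left hlt (Real.exp_pos A')
      _ = Real.exp A' * Real.exp (-t) * ∑ j ∈ s, w j * Real.exp (x j) := by
          rw [← Finset.mul_sum, mul_assoc]
  have h3 : Real.exp A < Real.exp (A' + -t) := lt_of_mul_lt_mul_right h2 hS.le
  have := Real.exp_lt_exp.1 h3
  linarith

/-- Uniqueness of the solution of the exponential system arising from the local
estimating equations for the degree parameters (normalization `βₙ := 0`):
the system `exp(αᵢ) Σ_{j≠i} c_{ij} exp(βⱼ) = aᵢ` (for all `i`) and
`exp(βⱼ) Σ_{i≠j} c_{ij} exp(αᵢ) = bⱼ` (for `j = 1,…,n-1`) has at most one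
solution. -/
theorem exponential_system_unique (n : ℕ) (hn : 3 ≤ n)
    (a : Fin n → ℝ) (ha : ∀ i, 0 < a i)
    (b : Fin n → ℝ) (hb : ∀ j : Fin n, (j : ℕ) < n - 1 → 0 < b j)
    (c : Fin n → Fin n → ℝ) (hc : ∀ i j : Fin n, i ≠ j → 0 < c i j)
    (α α' β β' : Fin n → ℝ)
    (hβn : β ⟨n - 1, by omega⟩ = 0) (hβ'n : β' ⟨n - 1, by omega⟩ = 0)
    (h1 : ∀ i : Fin n,
      Real.exp (α i) * ∑ j ∈ Finset.univ.erase i, c i j * Real.exp (β j) = a i)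
    (h2 : ∀ j : Fin n, (j : ℕ) < n - 1 →
      Real.exp (β j) * ∑ i ∈ Finset.univ.erase j, c i j * Real.exp (α i) = b j)
    (h1' : ∀ i : Fin n,
      Real.exp (α' i) * ∑ j ∈ Finset.univ.erase i, c i j * Real.exp (β' j) = a i)
    (h2' : ∀ j : Fin n, (j : ℕ) < n - 1 →
      Real.exp (β' j) * ∑ i ∈ Finset.univ.erase j, c i j * Real.exp (α' i) = b j) :
    α = α' ∧ β = β' := by
  classical
  set L : Fin n := ⟨n - 1, by omega⟩ with hLdef
  set d : Fin n → ℝ := fun i => α i - α' i with hd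
  set g : Fin n → ℝ := fun j => β j - β' j with hg
  have hgL : g L = 0 := by simp only [hg, hβn, hβ'n, sub_zero]
  have hne : ∀ i : Fin n, (Finset.univ.erase i).Nonempty := by
    intro i
    have : Nontrivial (Fin n) :=
      ⟨⟨⟨0, by omega⟩, ⟨1, by omega⟩, by simp [Fin.ext_iff]⟩⟩
    obtain ⟨j, hj⟩ := exists_ne i
    exact ⟨j, Finset.mem_erase.2 ⟨hj, Finset.mem_univ j⟩⟩
  have hltL : ∀ j : Fin n, j ≠ L → (j : ℕ) < n - 1 := by
    intro j hj
    have h := j.isLt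
    by_contra h'
    exact hj (Fin.ext (by simp only [hLdef]; omega))
  have heqα : ∀ i : Fin n,
      Real.exp (α i) * ∑ j ∈ Finset.univ.erase i, c i j * Real.exp (β j)
      = Real.exp (α' i) * ∑ j ∈ Finset.univ.erase i, c i j * Real.exp (β' j) :=
    fun i => (h1 i).trans (h1' i).symm
  have heqβ : ∀ j : Fin n, j ≠ L →
      Real.exp (β j) * ∑ i ∈ Finset.univ.erase j, c i j * Real.exp (α i)
      = Real.exp (β' j) * ∑ i ∈ Finset.univ.erase j, c i j * Real.exp (α' i) :=
    fun j hj => (h2 j (hltL j hj)).trans (h2' j (hltL j hj)).symm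
  have hwα : ∀ i : Fin n, ∀ j ∈ Finset.univ.erase i, 0 < c i j :=
    fun i j hj => hc i j (Ne.symm (Finset.mem_erase.1 hj).1)
  have hwβ : ∀ j : Fin n, ∀ i ∈ Finset.univ.erase j, 0 < c i j :=
    fun j i hi => hc i j (Finset.mem_erase.1 hi).1
  -- key bounds
  have keyA : ∀ (i : Fin n) (t : ℝ),
      (∀ j ∈ Finset.univ.erase i, t ≤ g j) → d i ≤ -t := by
    intro i t ht
    exact aux_le _ (hne i) (c i) β β' (hwα i) (α i) (α' i) t (heqα i) ht
  have keyA' : ∀ (i : Fin n) (t : ℝ),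
      (∀ j ∈ Finset.univ.erase i, t ≤ g j) →
      ∀ j0 ∈ Finset.univ.erase i, t < g j0 → d i < -t := by
    intro i t ht j0 hj0 hs
    exact aux_lt _ (c i) β β' (hwα i) (α i) (α' i) t (heqα i) ht j0 hj0 hs
  have keyAm : ∀ (i : Fin n) (t : ℝ),
      (∀ j ∈ Finset.univ.erase i, g j ≤ t) → -t ≤ d i := by
    intro i t ht
    have := aux_le _ (hne i) (c i) β' β (hwα i) (α' i) (α i) (-t) (heqα i).symm
      (fun j hj => by have := ht j hj; simp only [hg] at this ⊢; linarith)
    simp only [hd, hg] at this ⊢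
    linarith
  have keyAm' : ∀ (i : Fin n) (t : ℝ),
      (∀ j ∈ Finset.univ.erase i, g j ≤ t) →
      ∀ j0 ∈ Finset.univ.erase i, g j0 < t → d i > -t := by
    intro i t ht j0 hj0 hs
    have := aux_lt _ (c i) β' β (hwα i) (α' i) (α i) (-t) (heqα i).symm
      (fun j hj => by have := ht j hj; simp only [hg] at this ⊢; linarith)
      j0 hj0 (by simp only [hg] at hs ⊢; linarith)
    simp only [hd, hg] at this ⊢
    linarith
  have keyB : ∀ (j : Fin n), j ≠ L → ∀ (t : ℝ),
      (∀ i ∈ Finset.univ.erase j, t ≤ d i) → g j ≤ -t := by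
    intro j hj t ht
    exact aux_le _ (hne j) (fun i => c i j) α α' (hwβ j) (β j) (β' j) t
      (heqβ j hj) ht
  have keyB' : ∀ (j : Fin n), j ≠ L → ∀ (t : ℝ),
      (∀ i ∈ Finset.univ.erase j, t ≤ d i) →
      ∀ i0 ∈ Finset.univ.erase j, t < d i0 → g j < -t := by
    intro j hj t ht i0 hi0 hs
    exact aux_lt _ (fun i => c i j) α α' (hwβ j) (β j) (β' j) t
      (heqβ j hj) ht i0 hi0 hs
  have keyBm : ∀ (j : Fin n), j ≠ L → ∀ (t : ℝ),
      (∀ i ∈ Finset.univ.erase j, d i ≤ t) → -t ≤ g j := by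
    intro j hj t ht
    have := aux_le _ (hne j) (fun i => c i j) α' α (hwβ j) (β' j) (β j) (-t)
      (heqβ j hj).symm
      (fun i hi => by have := ht i hi; simp only [hd] at this ⊢; linarith)
    simp only [hd, hg] at this ⊢
    linarith
  have keyBm' : ∀ (j : Fin n), j ≠ L → ∀ (t : ℝ),
      (∀ i ∈ Finset.univ.erase j, d i ≤ t) →
      ∀ i0 ∈ Finset.univ.erase j, d i0 < t → g j > -t := by
    intro j hj t ht i0 hi0 hs
    have := aux_lt _ (fun i => c i j) α' α (hwβ j) (β' j) (β j) (-t)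
      (heqβ j hj).symm
      (fun i hi => by have := ht i hi; simp only [hd] at this ⊢; linarith)
      i0 hi0 (by simp only [hd] at hs ⊢; linarith)
    simp only [hd, hg] at this ⊢
    linarith
  -- max and min of all differences
  set T : Finset ℝ :=
    Finset.univ.image d ∪ Finset.univ.image g with hT
  have hTne : T.Nonempty :=
    ⟨g L, Finset.mem_union_right _ (Finset.mem_image_of_mem g (Finset.mem_univ L))⟩
  set M : ℝ := T.max' hTne with hM
  set m : ℝ := T.min' hTne with hm
  have hdM : ∀ i, d i ≤ M := fun i =>
    Finset.le_max' T _ (Finset.mem_union_left _ (Finset.mem_image_of_mem d (Finset.mem_univ i)))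
  have hgM : ∀ j, g j ≤ M := fun j =>
    Finset.le_max' T _ (Finset.mem_union_right _ (Finset.mem_image_of_mem g (Finset.mem_univ j)))
  have hdm : ∀ i, m ≤ d i := fun i =>
    Finset.min'_le T _ (Finset.mem_union_left _ (Finset.mem_image_of_mem d (Finset.mem_univ i)))
  have hgm : ∀ j, m ≤ g j := fun j =>
    Finset.min'_le T _ (Finset.mem_union_right _ (Finset.mem_image_of_mem g (Finset.mem_univ j)))
  have hm0 : m ≤ 0 := hgL ▸ hgm L
  have hM0 : 0 ≤ M := hgL ▸ hgM L
  have hmemM : (∃ i, d i = M) ∨ (∃ j, g j = M) := by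
    have hmem : M ∈ T := T.max'_mem hTne
    rw [hT] at hmem
    rcases Finset.mem_union.1 hmem with h | h
    · obtain ⟨i, _, hi⟩ := Finset.mem_image.1 h; exact Or.inl ⟨i, hi⟩
    · obtain ⟨j, _, hj⟩ := Finset.mem_image.1 h; exact Or.inr ⟨j, hj⟩
  have hmemm : (∃ i, d i = m) ∨ (∃ j, g j = m) := by
    have hmem : m ∈ T := T.min'_mem hTne
    rw [hT] at hmem
    rcases Finset.mem_union.1 hmem with h | h
    · obtain ⟨i, _, hi⟩ := Finset.mem_image.1 h; exact Or.inl ⟨i, hi⟩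
    · obtain ⟨j, _, hj⟩ := Finset.mem_image.1 h; exact Or.inr ⟨j, hj⟩
  have hMm : M ≤ -m := by
    rcases hmemM with ⟨i0, hi0⟩ | ⟨j0, hj0⟩
    · have := keyA i0 m (fun j _ => hgm j); linarith
    · by_cases hj : j0 = L
      · rw [hj, hgL] at hj0; linarith
      · have := keyB j0 hj m (fun i _ => hdm i); linarith
  have hmM : -M ≤ m := by
    rcases hmemm with ⟨i0, hi0⟩ | ⟨j0, hj0⟩
    · have := keyAm i0 M (fun j _ => hgM j); linarith
    · by_cases hj : j0 = L
      · rw [hj, hgL] at hj0; linarith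
      · have := keyBm j0 hj M (fun i _ => hdM i); linarith
  have hmeq : m = -M := by linarith
  -- propagation of extremal values
  have P1 : ∀ i : Fin n, d i = M → ∀ j ∈ Finset.univ.erase i, g j = m := by
    intro i hi j hj
    by_contra hne'
    have hlt : m < g j := lt_of_le_of_ne (hgm j) (Ne.symm hne')
    have := keyA' i m (fun k _ => hgm k) j hj hlt
    linarith
  have P2 : ∀ j : Fin n, j ≠ L → g j = M → ∀ i ∈ Finset.univ.erase j, d i = m := by
    intro j hjL hj i hi
    by_contra hne'
    have hlt : m < d i := lt_of_le_of_ne (hdm i) (Ne.symm hne')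
    have := keyB' j hjL m (fun k _ => hdm k) i hi hlt
    linarith
  have P3 : ∀ i : Fin n, d i = m → ∀ j ∈ Finset.univ.erase i, g j = M := by
    intro i hi j hj
    by_contra hne'
    have hlt : g j < M := lt_of_le_of_ne (hgM j) hne'
    have := keyAm' i M (fun k _ => hgM k) j hj hlt
    linarith
  have P4 : ∀ j : Fin n, j ≠ L → g j = m → ∀ i ∈ Finset.univ.erase j, d i = M := by
    intro j hjL hj i hi
    by_contra hne'
    have hlt : d i < M := lt_of_le_of_ne (hdM i) hne'
    have := keyBm' j hjL M (fun k _ => hdM k) i hi hlt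
    linarith
  -- M ≤ 0
  have hMle : M ≤ 0 := by
    by_contra hMpos
    push_neg at hMpos
    rcases hmemM with ⟨i0, hi0⟩ | ⟨j0, hj0⟩
    · by_cases hi0L : i0 = L
      · -- i0 = L : propagate around
        set j1 : Fin n := ⟨0, by omega⟩ with hj1def
        have hj1L : j1 ≠ L := by
          simp only [hj1def, hLdef, ne_eq, Fin.mk.injEq]; omega
        have hj1i0 : j1 ≠ i0 := hi0L ▸ hj1L
        have hgj1 : g j1 = m :=
          P1 i0 hi0 j1 (Finset.mem_erase.2 ⟨hj1i0, Finset.mem_univ _⟩)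
        set i2 : Fin n := ⟨1, by omega⟩ with hi2def
        have hi2j1 : i2 ≠ j1 := by
          simp only [hi2def, hj1def, ne_eq, Fin.mk.injEq]; omega
        have hi2L : i2 ≠ L := by
          simp only [hi2def, hLdef, ne_eq, Fin.mk.injEq]; omega
        have hdi2 : d i2 = M :=
          P4 j1 hj1L hgj1 i2 (Finset.mem_erase.2 ⟨hi2j1, Finset.mem_univ _⟩)
        have hgLm : g L = m :=
          P1 i2 hdi2 L (Finset.mem_erase.2 ⟨Ne.symm hi2L, Finset.mem_univ _⟩)
        rw [hgL] at hgLm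
        linarith
      · have hgLm : g L = m :=
          P1 i0 hi0 L (Finset.mem_erase.2 ⟨Ne.symm hi0L, Finset.mem_univ _⟩)
        rw [hgL] at hgLm
        linarith
    · by_cases hj0L : j0 = L
      · rw [hj0L, hgL] at hj0; linarith
      · obtain ⟨i1, hi1⟩ : ∃ i : Fin n, i ≠ j0 ∧ i ≠ L := by
          have hcard : ({j0, L} : Finset (Fin n)).card ≤ 2 := by
            apply le_trans (Finset.card_insert_le _ _)
            simp
          have hnon : (Finset.univ \ ({j0, L} : Finset (Fin n))).Nonempty := by
            rw [← Finset.card_pos, Finset.card_sdiff, Finset.inter_univ,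
              Finset.card_univ, Fintype.card_fin]
            omega
          obtain ⟨i1, hi1⟩ := hnon
          rw [Finset.mem_sdiff, Finset.mem_insert, Finset.mem_singleton] at hi1
          exact ⟨i1, by tauto, by tauto⟩
        have hdi1 : d i1 = m :=
          P2 j0 hj0L hj0 i1 (Finset.mem_erase.2 ⟨hi1.1, Finset.mem_univ _⟩)
        have hgLM : g L = M :=
          P3 i1 hdi1 L (Finset.mem_erase.2 ⟨Ne.symm hi1.2, Finset.mem_univ _⟩)
        rw [hgL] at hgLM
        linarith
  have hMzero : M = 0 := le_antisymm hMle hM0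
  have hmzero : m = 0 := by rw [hmeq, hMzero, neg_zero]
  constructor
  · funext i
    have h1 := hdM i
    have h2 := hdm i
    simp only [hd] at h1 h2
    rw [hMzero] at h1
    rw [hmzero] at h2
    linarith
  · funext j
    have h1 := hgM j
    have h2 := hgm j
    simp only [hg] at h1 h2
    rw [hMzero] at h1
    rw [hmzero] at h2
    linarith
end
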